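/- Let n ≥ 1 be an integer such that s'^n lies in the centre of G'. Then for every g ∈ C_G(s), the element g^n lies in π(C_{G'}(s')). (This is the key step showing that the exponent of the component group A(s) divides the order of the image of s in the adjoint group.) -/
import Mathlib


/-- Let `π : G' → G` be surjective with central kernel, `s ∈ G` and
`s' ∈ G'` a lift of `s`. If `n ≥ 1` is such that `s'^n` is central in `G'`, then for every
`g ∈ C_G(s)` the element `g^n` lies in `π(C_{G'}(s'))`. -/
theorem pow_mem_image_centralizer
    {G' G : Type*} [Group G'] [Group G] (π : G' →* G)
    (hsurj : Function.Surjective π) (hker : π.ker ≤ Subgroup.center G')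
    (s : G) (s' : G') (hs' : π s' = s)
    (n : ℕ) (hn : 1 ≤ n) (hc : s' ^ n ∈ Subgroup.center G') :
    ∀ g ∈ Subgroup.centralizer {s}, g ^ n ∈ (Subgroup.centralizer {s'}).map π := by
  intro g hg
  obtain ⟨g', hg'⟩ := hsurj g
  have hcomm : s * g = g * s := hg s rfl
  set z : G' := g' * s' * g'⁻¹ * s'⁻¹ with hz
  have hzker : z ∈ π.ker := by
    simp only [MonoidHom.mem_ker, hz, map_mul, map_inv, hg', hs']
    rw [← hcomm]
    group
  have hzc : ∀ x : G', x * z = z * x := Subgroup.mem_center_iff.mp (hker hzker)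
  have hcc : ∀ x : G', x * s' ^ n = s' ^ n * x := Subgroup.mem_center_iff.mp hc
  have hconj : g' * s' * g'⁻¹ = z * s' := by rw [hz]; group
  have hzs : Commute z s' := (hzc s').symm
  -- zⁿ = 1 since s'ⁿ is central
  have hzn : z ^ n = 1 := by
    have h1 : g' * s' ^ n * g'⁻¹ = (z * s') ^ n := by rw [← hconj, conj_pow]
    have h3 : g' * s' ^ n * g'⁻¹ = s' ^ n := by
      rw [mul_assoc, ← hcc g'⁻¹, ← mul_assoc, mul_inv_cancel, one_mul]
    have := h3.symm.trans h1
    rw [hzs.mul_pow] at this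
    exact mul_right_cancel (b := s' ^ n) (by rw [one_mul, ← this])
  -- hence g'ⁿ commutes with s'
  have key : ∀ k : ℕ, g' ^ k * s' * (g' ^ k)⁻¹ = z ^ k * s' := by
    intro k
    induction k with
    | zero => simp
    | succ m ih =>
      rw [pow_succ, mul_inv_rev]
      calc g' ^ m * g' * s' * (g'⁻¹ * (g' ^ m)⁻¹)
          = g' ^ m * (g' * s' * g'⁻¹) * (g' ^ m)⁻¹ := by group
        _ = g' ^ m * (z * s') * (g' ^ m)⁻¹ := by rw [hconj]
        _ = z * (g' ^ m * s' * (g' ^ m)⁻¹) := by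
            conv_lhs => rw [← mul_assoc, hzc (g' ^ m)]
            group
        _ = z * (z ^ m * s') := by rw [ih]
        _ = z ^ (m + 1) * s' := by
            rw [pow_succ, ← mul_assoc, hzc (z ^ m)]
  have hfin : g' ^ n * s' * (g' ^ n)⁻¹ = s' := by rw [key, hzn, one_mul]
  refine ⟨g' ^ n, ?_, by rw [map_pow, hg']⟩
  intro m hm
  rw [Set.mem_singleton_iff] at hm
  rw [hm]
  calc s' * g' ^ n = (g' ^ n * s' * (g' ^ n)⁻¹) * g' ^ n := by rw [hfin]
    _ = g' ^ n * s' := by group
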